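/- arXiv:2105.03137 — 3 statements merged into one kernel-verified Lean document; each statement's English description precedes it below -/
import Mathlib

section
/- For positive semidefinite Hermitian matrices A and B of the same size n, log det(I + A + B) - log det(I + B) is at most the sum over i of log(1 + λ_i(A)), where λ_i(A) are the eigenvalues of A. -/
open Matrix ComplexOrder


lemma eig_le_one {n : ℕ} {P : Matrix (Fin n) (Fin n) ℂ}
    (hP : P.PosSemidef) (h1 : (1 - P).PosSemidef) (i : Fin n) :
    hP.1.eigenvalues i ≤ 1 := by
  set v : Fin n → ℂ := ⇑(hP.1.eigenvectorBasis i) with hv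
  have h := h1.re_dotProduct_nonneg v
  have hvv : dotProduct (star v) v = 1 := by
    have h2 := hP.1.eigenvectorBasis.orthonormal.1 i
    rw [hv, dotProduct_comm, ← EuclideanSpace.inner_eq_star_dotProduct]
    simp [inner_self_eq_norm_sq_to_K, h2]
  rw [Matrix.sub_mulVec, Matrix.one_mulVec, dotProduct_sub, map_sub, hvv] at h
  have he := hP.1.eigenvalues_eq i
  rw [he]
  simp only [RCLike.one_re] at h
  linarith

lemma det_eq_re {n : ℕ} {M : Matrix (Fin n) (Fin n) ℂ} (hM : M.IsHermitian) :
    M.det = ((∏ i, hM.eigenvalues i : ℝ) : ℂ) := by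
  rw [hM.det_eq_prod_eigenvalues]
  push_cast
  rfl

lemma det_le_one {n : ℕ} {P : Matrix (Fin n) (Fin n) ℂ}
    (hP : P.PosSemidef) (h1 : (1 - P).PosSemidef) :
    P.det.re ≤ 1 := by
  rw [det_eq_re hP.1, Complex.ofReal_re]
  apply Finset.prod_le_one
  · intro i _; exact hP.eigenvalues_nonneg i
  · intro i _; exact eig_le_one hP h1 i

lemma det_re_nonneg {n : ℕ} {P : Matrix (Fin n) (Fin n) ℂ} (hP : P.PosSemidef) :
    0 ≤ P.det.re := by
  rw [det_eq_re hP.1, Complex.ofReal_re]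
  exact Finset.prod_nonneg fun i _ => hP.eigenvalues_nonneg i

lemma det_re_mono {n : ℕ} {M N : Matrix (Fin n) (Fin n) ℂ}
    (hM : M.PosSemidef) (hN : N.PosDef) (hMN : (N - M).PosSemidef) :
    M.det.re ≤ N.det.re := by
  open scoped MatrixOrder in set R := CFC.sqrt N with hRdef
  have hR : R.PosSemidef := open scoped MatrixOrder in (CFC.sqrt_nonneg N).posSemidef
  have hRR : R * R = N := open scoped MatrixOrder in CFC.sqrt_mul_sqrt_self N hN.posSemidef.nonneg
  have hdetR : R.det * R.det = N.det := by rw [← det_mul, hRR]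
  have hdetN : N.det ≠ 0 := hN.det_pos.ne'
  have hRdet : R.det ≠ 0 := fun h => hdetN (by rw [← hdetR, h, zero_mul])
  have hRinv : R⁻¹ * R = 1 := nonsing_inv_mul R (isUnit_iff_ne_zero.2 hRdet)
  have hRinv' : R * R⁻¹ = 1 := mul_nonsing_inv R (isUnit_iff_ne_zero.2 hRdet)
  have hRH : R⁻¹ᴴ = R⁻¹ := by rw [conjTranspose_nonsing_inv, hR.1]
  set P := R⁻¹ * M * R⁻¹ with hPdef
  have hP : P.PosSemidef := by
    have := hM.conjTranspose_mul_mul_same R⁻¹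
    rwa [hRH] at this
  have hNP : R⁻¹ * N * R⁻¹ = 1 := by
    rw [← hRR, ← mul_assoc, mul_assoc (R⁻¹ * R), hRinv, hRinv', one_mul]
  have h1P : (1 - P).PosSemidef := by
    have := hMN.conjTranspose_mul_mul_same R⁻¹
    rw [hRH] at this
    rwa [Matrix.mul_sub, Matrix.sub_mul, hNP] at this
  have hMdet : M.det = N.det * P.det := by
    have hM' : M = R * P * R := by
      rw [hPdef, ← mul_assoc, ← mul_assoc, hRinv', one_mul, mul_assoc, hRinv, mul_one]
    rw [hM', det_mul, det_mul, ← hdetR]; ring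
  obtain ⟨a, ha⟩ : ∃ r : ℝ, N.det = (r : ℂ) := ⟨_, det_eq_re hN.1⟩
  obtain ⟨b, hb⟩ : ∃ r : ℝ, P.det = (r : ℂ) := ⟨_, det_eq_re hP.1⟩
  have hapos : 0 < a := by
    have := hN.det_pos
    rw [ha] at this
    exact_mod_cast this
  have hble : b ≤ 1 := by have := det_le_one hP h1P; rwa [hb, Complex.ofReal_re] at this
  have hbnn : 0 ≤ b := by have := det_re_nonneg hP; rwa [hb, Complex.ofReal_re] at this
  rw [hMdet, ha, hb]
  push_cast
  simp only [Complex.ofReal_re, ← Complex.ofReal_mul, Complex.mul_re]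
  nlinarith


lemma det_one_add_eq {n : ℕ} {A : Matrix (Fin n) (Fin n) ℂ} (hA : A.IsHermitian) :
    (1 + A).det = ((∏ i, (1 + hA.eigenvalues i) : ℝ) : ℂ) := by
  set U := (hA.eigenvectorUnitary : Matrix (Fin n) (Fin n) ℂ) with hUdef
  have hU : U * star U = 1 := mem_unitaryGroup_iff.mp hA.eigenvectorUnitary.2
  set D : Matrix (Fin n) (Fin n) ℂ := diagonal (RCLike.ofReal ∘ hA.eigenvalues) with hDdef
  have h1 : (1 : Matrix (Fin n) (Fin n) ℂ) + A = U * (1 + D) * star U := by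
    rw [Matrix.mul_add, Matrix.add_mul, mul_one, hU]
    conv_lhs => rw [hA.spectral_theorem, Unitary.conjStarAlgAut_apply]
  rw [h1, det_mul, det_mul]
  have : (1 : Matrix (Fin n) (Fin n) ℂ) + D = diagonal (fun i => 1 + (hA.eigenvalues i : ℂ)) := by
    rw [hDdef, ← diagonal_one, diagonal_add]
    rfl
  rw [this, det_diagonal]
  have hUU : U.det * (star U).det = 1 := by rw [← det_mul, hU, det_one]
  push_cast
  calc U.det * (∏ i, (1 + (hA.eigenvalues i : ℂ))) * (star U).det
      = (U.det * (star U).det) * ∏ i, (1 + (hA.eigenvalues i : ℂ)) := by ring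
    _ = ∏ i, (1 + (hA.eigenvalues i : ℂ)) := by rw [hUU, one_mul]

lemma one_sub_inv_psd {n : ℕ} {B : Matrix (Fin n) (Fin n) ℂ} (hB : B.PosSemidef) :
    (1 - (1 + B)⁻¹).PosSemidef := by
  set S := 1 + B with hSdef
  have hS : S.PosDef := Matrix.PosDef.one.add_posSemidef hB
  have hdet : IsUnit S.det := isUnit_iff_ne_zero.2 hS.det_pos.ne'
  have h1 : S⁻¹ * S = 1 := nonsing_inv_mul S hdet
  have h2 : S * S⁻¹ = 1 := mul_nonsing_inv S hdet
  have hH : S⁻¹ᴴ = S⁻¹ := by rw [conjTranspose_nonsing_inv, hS.1]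
  have key : 1 - S⁻¹ = S⁻¹ * (B + B * B) * S⁻¹ := by
    have e1 : S⁻¹ * (B + B * B) * S⁻¹ = S⁻¹ * B * (S * S⁻¹) := by
      rw [hSdef]; noncomm_ring
    have e2 : S⁻¹ * B = 1 - S⁻¹ := by
      have := h1
      rw [hSdef, Matrix.mul_add, mul_one] at this
      linear_combination (norm := noncomm_ring) this
    rw [e1, h2, mul_one, e2]
  rw [key]
  have hBB : (B + B * B).PosSemidef := by
    have := hB.pow 2
    rw [pow_two] at this
    exact hB.add this
  have := hBB.conjTranspose_mul_mul_same S⁻¹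
  rwa [hH] at this

lemma det_re_pos {n : ℕ} {M : Matrix (Fin n) (Fin n) ℂ} (hM : M.PosDef) :
    0 < M.det.re := by
  have h := hM.det_pos
  rw [det_eq_re hM.1] at h ⊢
  rw [Complex.ofReal_re]
  exact_mod_cast h

/-- For positive semidefinite Hermitian `A`, `B`,
`log det (I + A + B) - log det (I + B) ≤ ∑ i, log (1 + λᵢ(A))`. -/
theorem logdet_add_sub_le_sum_log_eigenvalues
    (n : ℕ) (A B : Matrix (Fin n) (Fin n) ℂ)
    (hA : A.PosSemidef) (hB : B.PosSemidef) :
    Real.log ((1 + A + B).det.re) - Real.log ((1 + B).det.re) ≤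
      ∑ i, Real.log (1 + hA.1.eigenvalues i) := by
  set S := (1 + B : Matrix (Fin n) (Fin n) ℂ) with hSdef
  have hS : S.PosDef := Matrix.PosDef.one.add_posSemidef hB
  have hX : (1 + A + B).PosDef := (Matrix.PosDef.one.add_posSemidef hA).add_posSemidef hB
  have hN : (1 + A).PosDef := Matrix.PosDef.one.add_posSemidef hA
  -- sqrt of S
  open scoped MatrixOrder in set R := CFC.sqrt S with hRdef
  have hRH : R.IsHermitian := open scoped MatrixOrder in (CFC.sqrt_nonneg S).posSemidef.1
  have hRR : R * R = S := open scoped MatrixOrder in CFC.sqrt_mul_sqrt_self S hS.posSemidef.nonneg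
  have hdetR : R.det * R.det = S.det := by rw [← det_mul, hRR]
  have hRdet : R.det ≠ 0 := fun h => hS.det_pos.ne' (by rw [← hdetR, h, zero_mul])
  have hRu : IsUnit R.det := isUnit_iff_ne_zero.2 hRdet
  have hRinv : R⁻¹ * R = 1 := nonsing_inv_mul R hRu
  have hRinv' : R * R⁻¹ = 1 := mul_nonsing_inv R hRu
  have hRiH : R⁻¹ᴴ = R⁻¹ := by rw [conjTranspose_nonsing_inv, hRH]
  -- sqrt of A
  open scoped MatrixOrder in set Q := CFC.sqrt A with hQdef
  have hQH : Q.IsHermitian := open scoped MatrixOrder in (CFC.sqrt_nonneg A).posSemidef.1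
  have hQQ : Q * Q = A := open scoped MatrixOrder in CFC.sqrt_mul_sqrt_self A hA.nonneg
  -- S⁻¹ = R⁻¹ * R⁻¹
  have hSinv : S⁻¹ = R⁻¹ * R⁻¹ := by rw [← hRR, Matrix.mul_inv_rev]
  -- key det factorization
  have hfact : (1 + A + B).det = S.det * (1 + Q * S⁻¹ * Q).det := by
    have e0 : (1 + A + B) = S + A := by rw [hSdef]; abel
    have e1 : S + A = R * (1 + R⁻¹ * A * R⁻¹) * R := by
      rw [Matrix.mul_add, mul_one, Matrix.add_mul, hRR]
      congr 1
      symm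
      calc R * (R⁻¹ * A * R⁻¹) * R = (R * R⁻¹) * A * (R⁻¹ * R) := by noncomm_ring
        _ = A := by rw [hRinv', hRinv, one_mul, mul_one]
    have e2 : (1 + R⁻¹ * A * R⁻¹).det = (1 + Q * S⁻¹ * Q).det := by
      have h1 : R⁻¹ * A * R⁻¹ = (R⁻¹ * Q) * (Q * R⁻¹) := by
        rw [← hQQ]; noncomm_ring
      have h2 : (Q * R⁻¹) * (R⁻¹ * Q) = Q * S⁻¹ * Q := by
        rw [hSinv]; noncomm_ring
      rw [h1, det_one_add_mul_comm, h2]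
    rw [e0, e1, det_mul, det_mul, e2, ← hdetR]; ring
  -- PSD facts
  have hSiP : S⁻¹.PosSemidef := hS.posSemidef.inv
  have hQSQ : (Q * S⁻¹ * Q).PosSemidef := by
    have := hSiP.conjTranspose_mul_mul_same Q
    rwa [hQH] at this
  have hM : (1 + Q * S⁻¹ * Q).PosSemidef := Matrix.PosSemidef.one.add hQSQ
  have hdiff : ((1 + A) - (1 + Q * S⁻¹ * Q)).PosSemidef := by
    have h1 : (1 + A) - (1 + Q * S⁻¹ * Q) = Q * (1 - S⁻¹) * Q := by
      rw [← hQQ]; noncomm_ring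
    rw [h1]
    have := (one_sub_inv_psd hB).conjTranspose_mul_mul_same Q
    rwa [hQH] at this
  have hmono : (1 + Q * S⁻¹ * Q).det.re ≤ (1 + A).det.re := det_re_mono hM hN hdiff
  -- positivity
  have hXpos : 0 < (1 + A + B).det.re := det_re_pos hX
  have hSpos : 0 < S.det.re := det_re_pos hS
  have hNpos : 0 < (1 + A).det.re := det_re_pos hN
  have hMnn : 0 ≤ (1 + Q * S⁻¹ * Q).det.re := by
    rw [det_eq_re hM.1, Complex.ofReal_re]
    exact Finset.prod_nonneg fun i _ => hM.eigenvalues_nonneg i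
  -- real equation from hfact
  have hre : (1 + A + B).det.re = S.det.re * (1 + Q * S⁻¹ * Q).det.re := by
    rw [hfact, det_eq_re hS.1, det_eq_re hM.1, ← Complex.ofReal_mul,
      Complex.ofReal_re, Complex.ofReal_re, Complex.ofReal_re]
  have hineq : (1 + A + B).det.re ≤ S.det.re * (1 + A).det.re := by
    rw [hre]; nlinarith
  have hlog : Real.log ((1 + A + B).det.re) ≤
      Real.log (S.det.re) + Real.log ((1 + A).det.re) := by
    rw [← Real.log_mul hSpos.ne' hNpos.ne']
    exact Real.log_le_log hXpos hineq
  have hsum : Real.log ((1 + A).det.re) = ∑ i, Real.log (1 + hA.1.eigenvalues i) := by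
    rw [det_one_add_eq hA.1, Complex.ofReal_re]
    rw [Real.log_prod]
    intro i _
    have := hA.eigenvalues_nonneg i
    positivity
  linarith [hlog, hsum]
end

section
/- Let G be an n×n invertible complex matrix with singular values σ_1 ≥ ... ≥ σ_n, and let Q_s be a positive semidefinite Hermitian matrix with eigenvalues p_1 ≥ ... ≥ p_n. Then log det(I + G Q_s G†) ≤ Σ_{i=1}^n log(1 + σ_i² p_i). -/
open Matrix ComplexOrder

namespace LogDetAux

variable {n m : ℕ}

/-- real diagonal matrix over ℂ -/
noncomputable def rd (a : Fin n → ℝ) : Matrix (Fin n) (Fin n) ℂ :=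
  Matrix.diagonal (fun i => (a i : ℂ))

lemma rd_congr {f g : Fin n → ℝ} (h : ∀ i, f i = g i) : rd f = rd g := by
  have hfg : f = g := funext h
  rw [hfg]

lemma rd_conjTranspose (a : Fin n → ℝ) : (rd a)ᴴ = rd a := by
  rw [rd, diagonal_conjTranspose]
  congr 1
  funext i
  simp [Pi.star_def, Complex.star_def, Complex.conj_ofReal]

lemma rd_mul_rd (a b : Fin n → ℝ) : rd a * rd b = rd (fun i => a i * b i) := by
  simp only [rd, diagonal_mul_diagonal]
  congr 1
  funext i
  push_cast
  ring

lemma rd_add (a b : Fin n → ℝ) : rd (fun i => a i + b i) = rd a + rd b := by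
  ext i j
  by_cases h : i = j <;> simp [rd, h, Matrix.diagonal_apply]

lemma rd_one : rd (fun (_ : Fin n) => (1:ℝ)) = 1 := by
  simp only [rd, Complex.ofReal_one]
  exact diagonal_one

lemma one_add_rd (a : Fin n → ℝ) : rd (fun i => 1 + a i) = 1 + rd a := by
  rw [rd_add, rd_one]

lemma rd_smul (c : ℝ) (a : Fin n → ℝ) : rd (fun i => c * a i) = (c : ℂ) • rd a := by
  ext i j
  by_cases h : i = j <;> simp [rd, h, Matrix.diagonal_apply]

lemma det_rd (a : Fin n → ℝ) : (rd a).det = ((∏ i, a i : ℝ) : ℂ) := by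
  rw [rd, det_diagonal]
  push_cast
  ring

lemma rd_psd {a : Fin n → ℝ} (ha : ∀ i, 0 ≤ a i) : (rd a).PosSemidef :=
  Matrix.PosSemidef.diagonal (fun i => Complex.zero_le_real.mpr (ha i))

lemma psd_smul {S : Matrix (Fin n) (Fin n) ℂ} (hS : S.PosSemidef) {r : ℝ} (hr : 0 ≤ r) :
    ((r : ℂ) • S).PosSemidef := by
  constructor
  · unfold Matrix.IsHermitian
    rw [conjTranspose_smul, hS.1]
    congr 1
    simp [Complex.star_def, Complex.conj_ofReal]
  · exact (hS.smul (Complex.zero_le_real.mpr hr)).2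

lemma det_one_add_psd {S : Matrix (Fin n) (Fin n) ℂ} (hS : S.PosSemidef) :
    ∃ r : ℝ, 1 ≤ r ∧ (1 + S).det = (r : ℂ) := by
  refine ⟨∏ i, (1 + hS.1.eigenvalues i), ?_, ?_⟩
  · have h1 : ∏ _i : Fin n, (1:ℝ) ≤ ∏ i, (1 + hS.1.eigenvalues i) := by
      apply Finset.prod_le_prod
      · intros; norm_num
      · intro i _; linarith [hS.eigenvalues_nonneg i]
    simpa using h1
  · set V := (Matrix.IsHermitian.eigenvectorUnitary hS.1 : Matrix (Fin n) (Fin n) ℂ) with hVdef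
    have hV : star V * V = 1 :=
      Matrix.mem_unitaryGroup_iff'.mp (Matrix.IsHermitian.eigenvectorUnitary hS.1).2
    have hdet : (1 + S).det
        = (1 + Matrix.diagonal (RCLike.ofReal ∘ hS.1.eigenvalues) : Matrix (Fin n) (Fin n) ℂ).det := by
      conv_lhs => rw [hS.1.spectral_theorem, Unitary.conjStarAlgAut_apply]
      rw [show (V * Matrix.diagonal (RCLike.ofReal ∘ hS.1.eigenvalues) * star V)
          = V * (Matrix.diagonal (RCLike.ofReal ∘ hS.1.eigenvalues) * star V) from by
        rw [Matrix.mul_assoc]]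
      rw [Matrix.det_one_add_mul_comm, Matrix.mul_assoc, hV, Matrix.mul_one]
    rw [hdet, show (1 + Matrix.diagonal (RCLike.ofReal ∘ hS.1.eigenvalues) : Matrix (Fin n) (Fin n) ℂ)
        = Matrix.diagonal (fun i => 1 + (RCLike.ofReal ∘ hS.1.eigenvalues) i) from by
      rw [← diagonal_one, diagonal_add]]
    rw [det_diagonal]
    push_cast
    rfl

open scoped MatrixOrder in
lemma det_mono {X Y : Matrix (Fin n) (Fin n) ℂ} (hX : X.PosDef) (hd : (Y - X).PosSemidef) :
    X.det ≤ Y.det := by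
  set S := CFC.sqrt X with hSdef
  have hS : S.PosSemidef := (CFC.sqrt_nonneg X).posSemidef
  have hSS : S * S = X := CFC.sqrt_mul_sqrt_self X hX.posSemidef.nonneg
  have hdet : S.det * S.det = X.det := by rw [← det_mul, hSS]
  have hXdet : (0 : ℂ) < X.det := hX.det_pos
  have hdS : S.det ≠ 0 := by
    intro h
    rw [h, mul_zero] at hdet
    exact hXdet.ne' hdet.symm
  have hunit : IsUnit S.det := isUnit_iff_ne_zero.mpr hdS
  have hinv1 : S * S⁻¹ = 1 := mul_nonsing_inv S hunit
  have hinv2 : S⁻¹ * S = 1 := nonsing_inv_mul S hunit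
  have hSinvH : (S⁻¹)ᴴ = S⁻¹ := by rw [conjTranspose_nonsing_inv, hS.1]
  have hZpsd : (S⁻¹ * (Y - X) * S⁻¹).PosSemidef := by
    have := hd.conjTranspose_mul_mul_same (B := S⁻¹)
    rwa [hSinvH] at this
  set Z := S⁻¹ * (Y - X) * S⁻¹ with hZdef
  have hY : Y = S * (1 + Z) * S := by
    have h1 : S * Z * S = Y - X := by
      rw [hZdef]
      rw [show S * (S⁻¹ * (Y - X) * S⁻¹) * S = (S * S⁻¹) * (Y - X) * (S⁻¹ * S) from by
        noncomm_ring]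
      rw [hinv1, hinv2, Matrix.one_mul, Matrix.mul_one]
    have : S * (1 + Z) * S = S * S + S * Z * S := by noncomm_ring
    rw [this, hSS, h1]
    abel
  obtain ⟨r, hr1, hrdet⟩ := det_one_add_psd hZpsd
  have : Y.det = X.det * (r : ℂ) := by
    rw [hY, det_mul, det_mul, hrdet]
    ring_nf
    rw [← hdet]
    ring
  rw [this]
  calc X.det = X.det * 1 := by ring
    _ ≤ X.det * (r : ℂ) := by
        apply mul_le_mul_of_nonneg_left _ (le_of_lt hXdet)
        exact_mod_cast hr1


/-! ### dimension reduction -/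

lemma sub_mul_sub (M N : Matrix (Fin (m+1)) (Fin (m+1)) ℂ) :
    M.submatrix Fin.castSucc id * N.submatrix id Fin.castSucc
      = (M * N).submatrix Fin.castSucc Fin.castSucc := by
  ext i j
  simp [Matrix.mul_apply]

lemma diag_mul_eq {a : Fin (m+1) → ℝ} (h : a (Fin.last m) = 0)
    (M : Matrix (Fin (m+1)) (Fin (m+1)) ℂ) :
    rd a * M = (rd a).submatrix id Fin.castSucc * M.submatrix Fin.castSucc id := by
  ext i j
  have hlast : rd a i (Fin.last m) = 0 := by
    by_cases hi : i = Fin.last m <;> simp [rd, Matrix.diagonal_apply, hi, h]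
  rw [Matrix.mul_apply, Matrix.mul_apply, Fin.sum_univ_castSucc, hlast, zero_mul, add_zero]
  simp [Matrix.submatrix_apply]

lemma sub_mul_diag (N : Matrix (Fin (m+1)) (Fin (m+1)) ℂ) (a : Fin (m+1) → ℝ) :
    (N * rd a).submatrix Fin.castSucc Fin.castSucc
      = N.submatrix Fin.castSucc Fin.castSucc * rd (a ∘ Fin.castSucc) := by
  ext i j
  simp [rd, Matrix.mul_diagonal, Matrix.submatrix_apply]

lemma mid_eq {b : Fin (m+1) → ℝ} (h : b (Fin.last m) = 0)
    (C Z : Matrix (Fin (m+1)) (Fin (m+1)) ℂ) :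
    ((C * rd b) * Z).submatrix Fin.castSucc Fin.castSucc
      = (C.submatrix Fin.castSucc Fin.castSucc * rd (b ∘ Fin.castSucc))
          * Z.submatrix Fin.castSucc Fin.castSucc := by
  ext i j
  rw [Matrix.submatrix_apply, Matrix.mul_apply, Matrix.mul_apply]
  have hterm : ∀ k, (C * rd b) (Fin.castSucc i) k * Z k (Fin.castSucc j)
      = (C (Fin.castSucc i) k * (b k : ℂ)) * Z k (Fin.castSucc j) := fun k => by
    simp [rd, Matrix.mul_diagonal]
  rw [Finset.sum_congr rfl (fun k _ => hterm k), Fin.sum_univ_castSucc]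
  simp [h, Matrix.submatrix_apply, rd, Matrix.mul_diagonal]

lemma reduce {a b : Fin (m+1) → ℝ} (ha : a (Fin.last m) = 0) (hb : b (Fin.last m) = 0)
    (C : Matrix (Fin (m+1)) (Fin (m+1)) ℂ) :
    (1 + rd a * C * rd b * Cᴴ).det
      = (1 + rd (a ∘ Fin.castSucc) * C.submatrix Fin.castSucc Fin.castSucc
          * rd (b ∘ Fin.castSucc) * (C.submatrix Fin.castSucc Fin.castSucc)ᴴ).det := by
  set C₀ := C.submatrix Fin.castSucc Fin.castSucc with hC₀
  have h1 : rd a * C * rd b * Cᴴ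
      = (rd a).submatrix id Fin.castSucc * (C * rd b * Cᴴ).submatrix Fin.castSucc id := by
    rw [← diag_mul_eq ha]
    noncomm_ring
  rw [h1, Matrix.det_one_add_mul_comm, sub_mul_sub]
  have h2 : ((C * rd b * Cᴴ) * rd a).submatrix Fin.castSucc Fin.castSucc
      = (C₀ * rd (b ∘ Fin.castSucc)) * ((C₀)ᴴ * rd (a ∘ Fin.castSucc)) := by
    rw [show (C * rd b * Cᴴ) * rd a = (C * rd b) * (Cᴴ * rd a) from by noncomm_ring]
    rw [mid_eq hb]
    congr 1
    rw [show Cᴴ * rd a = Cᴴ * rd a from rfl]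
    calc (Cᴴ * rd a).submatrix Fin.castSucc Fin.castSucc
        = Cᴴ.submatrix Fin.castSucc Fin.castSucc * rd (a ∘ Fin.castSucc) := sub_mul_diag Cᴴ a
      _ = C₀ᴴ * rd (a ∘ Fin.castSucc) := by rw [hC₀, Matrix.conjTranspose_submatrix]
  rw [h2, show (C₀ * rd (b ∘ Fin.castSucc)) * ((C₀)ᴴ * rd (a ∘ Fin.castSucc))
      = (C₀ * rd (b ∘ Fin.castSucc) * (C₀)ᴴ) * rd (a ∘ Fin.castSucc) from by noncomm_ring,
    Matrix.det_one_add_mul_comm]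
  congr 1
  noncomm_ring

lemma contraction_sub (C : Matrix (Fin (m+1)) (Fin (m+1)) ℂ)
    (hC : ((1 : Matrix (Fin (m+1)) (Fin (m+1)) ℂ) - Cᴴ * C).PosSemidef) :
    ((1 : Matrix (Fin m) (Fin m) ℂ)
      - (C.submatrix Fin.castSucc Fin.castSucc)ᴴ * (C.submatrix Fin.castSucc Fin.castSucc)).PosSemidef := by
  set C₀ := C.submatrix Fin.castSucc Fin.castSucc with hC₀
  set R : Matrix (Fin 1) (Fin m) ℂ := fun _ j => C (Fin.last m) (Fin.castSucc j) with hR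
  have hsplit : (Cᴴ * C).submatrix Fin.castSucc Fin.castSucc = C₀ᴴ * C₀ + Rᴴ * R := by
    ext i j
    rw [Matrix.submatrix_apply, Matrix.add_apply, Matrix.mul_apply, Matrix.mul_apply,
      Matrix.mul_apply, Fin.sum_univ_castSucc]
    simp [Matrix.conjTranspose_apply, Matrix.submatrix_apply, hR, hC₀]
    exact Or.inl rfl
  have hone : ((1 : Matrix (Fin (m+1)) (Fin (m+1)) ℂ)).submatrix
      (Fin.castSucc (n := m)) Fin.castSucc = (1 : Matrix (Fin m) (Fin m) ℂ) := by
    ext i j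
    by_cases h : i = j <;> simp [Matrix.one_apply, Matrix.submatrix_apply, h, Fin.castSucc_inj]
  have h1 : (1 : Matrix (Fin m) (Fin m) ℂ) - C₀ᴴ * C₀
      = ((1 - Cᴴ * C).submatrix Fin.castSucc Fin.castSucc) + Rᴴ * R := by
    have hsub : (1 - Cᴴ * C).submatrix (Fin.castSucc (n := m)) Fin.castSucc
        = (1 : Matrix (Fin (m+1)) (Fin (m+1)) ℂ).submatrix Fin.castSucc Fin.castSucc
          - (Cᴴ * C).submatrix Fin.castSucc Fin.castSucc := by
      ext i j; simp [Matrix.submatrix_apply, Matrix.sub_apply]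
    rw [hsub, hone, hsplit]
    abel
  rw [h1]
  exact (hC.submatrix Fin.castSucc).add (posSemidef_conjTranspose_mul_self R)


/-! ### the peeling step -/

lemma step {a b b' : Fin n → ℝ} {β : ℝ} (hβ : 0 ≤ β)
    (ha0 : ∀ i, 0 ≤ a i) (hb'0 : ∀ i, 0 ≤ b' i)
    (hsplit : ∀ i, b i = β + b' i)
    (C : Matrix (Fin n) (Fin n) ℂ)
    (hC : ((1 : Matrix (Fin n) (Fin n) ℂ) - C * Cᴴ).PosSemidef) :
    (1 + rd a * C * rd b * Cᴴ).det
      ≤ ((∏ i, (1 + β * a i) : ℝ) : ℂ)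
        * (1 + rd (fun i => a i / (1 + β * a i)) * C * rd b' * Cᴴ).det := by
  have hb0 : ∀ i, 0 ≤ b i := fun i => by
    have := hb'0 i; rw [hsplit i]; linarith
  have hden : ∀ i, 0 < 1 + β * a i := fun i => by
    have := mul_nonneg hβ (ha0 i); linarith
  set sa : Fin n → ℝ := fun i => Real.sqrt (a i) with hsa
  have hsasa : rd sa * rd sa = rd a := by
    rw [rd_mul_rd]; exact rd_congr fun i => Real.mul_self_sqrt (ha0 i)
  -- Hermitized form
  have hherm : (1 + rd a * C * rd b * Cᴴ).det = (1 + rd sa * C * rd b * Cᴴ * rd sa).det := by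
    have e : rd a * C * rd b * Cᴴ = rd sa * (rd sa * C * rd b * Cᴴ) := by
      rw [← hsasa]; noncomm_ring
    have e2 : 1 + (rd sa * C * rd b * Cᴴ) * rd sa = 1 + rd sa * C * rd b * Cᴴ * rd sa := by
      noncomm_ring
    rw [e, Matrix.det_one_add_mul_comm, e2]
  set H₁ := 1 + rd sa * C * rd b * Cᴴ * rd sa with hH₁
  set H₂ := 1 + rd (fun i => β * a i) + rd sa * C * rd b' * Cᴴ * rd sa with hH₂
  have hinner : ∀ c : Fin n → ℝ, (∀ i, 0 ≤ c i) → (rd sa * C * rd c * Cᴴ * rd sa).PosSemidef := by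
    intro c hc
    have : rd sa * C * rd c * Cᴴ * rd sa = (rd sa * C) * rd c * (rd sa * C)ᴴ := by
      rw [Matrix.conjTranspose_mul, rd_conjTranspose]; noncomm_ring
    rw [this]
    exact (rd_psd hc).mul_mul_conjTranspose_same (rd sa * C)
  have hH₁pd : H₁.PosDef := Matrix.PosDef.one.add_posSemidef (hinner b hb0)
  have hdiffpsd : (H₂ - H₁).PosSemidef := by
    have hbeq : rd b = (β : ℂ) • 1 + rd b' := by
      rw [show b = fun i => β + b' i from funext hsplit,
        show (fun i => β + b' i) = fun i => β * 1 + b' i from by funext i; ring,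
        rd_add, rd_smul, rd_one]
    have hd : H₂ - H₁ = (β : ℂ) • (rd sa * (1 - C * Cᴴ) * rd sa) := by
      rw [hH₂, hH₁, hbeq, rd_smul]
      rw [show rd sa * (1 - C * Cᴴ) * rd sa = rd sa * rd sa - rd sa * C * Cᴴ * rd sa from by
        noncomm_ring, hsasa]
      rw [show rd sa * C * ((β:ℂ) • 1 + rd b') * Cᴴ * rd sa
          = (β:ℂ) • (rd sa * C * Cᴴ * rd sa) + rd sa * C * rd b' * Cᴴ * rd sa from by
        simp only [Matrix.mul_add, Matrix.add_mul, Matrix.mul_smul, Matrix.smul_mul,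
          Matrix.mul_one]
        try noncomm_ring]
      rw [smul_sub]
      try abel
    rw [hd]
    apply psd_smul _ hβ
    have := hC.mul_mul_conjTranspose_same (rd sa)
    rwa [rd_conjTranspose] at this
  have hle : H₁.det ≤ H₂.det := det_mono hH₁pd hdiffpsd
  -- factor H₂
  set g : Fin n → ℝ := fun i => Real.sqrt (1 + β * a i) with hg
  set h : Fin n → ℝ := fun i => Real.sqrt (a i / (1 + β * a i)) with hh
  have hgg : rd g * rd g = 1 + rd (fun i => β * a i) := by
    rw [rd_mul_rd, show (fun i => g i * g i) = fun i => 1 + β * a i from funext fun i =>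
      Real.mul_self_sqrt (le_of_lt (hden i)), one_add_rd]
  have hprod : ∀ i, (1 + β * a i) * (a i / (1 + β * a i)) = a i := fun i => by
    rw [mul_comm]
    exact div_mul_cancel₀ _ (ne_of_gt (hden i))
  have hgh : rd g * rd h = rd sa := by
    rw [rd_mul_rd]
    refine rd_congr fun i => ?_
    show Real.sqrt (1 + β * a i) * Real.sqrt (a i / (1 + β * a i)) = Real.sqrt (a i)
    rw [← Real.sqrt_mul (le_of_lt (hden i)), hprod i]
  have hhg : rd h * rd g = rd sa := by
    rw [rd_mul_rd]
    refine rd_congr fun i => ?_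
    show Real.sqrt (a i / (1 + β * a i)) * Real.sqrt (1 + β * a i) = Real.sqrt (a i)
    rw [mul_comm, ← Real.sqrt_mul (le_of_lt (hden i)), hprod i]
  have hhh : rd h * rd h = rd (fun i => a i / (1 + β * a i)) := by
    rw [rd_mul_rd]
    exact rd_congr fun i => Real.mul_self_sqrt (div_nonneg (ha0 i) (le_of_lt (hden i)))
  have hfact : H₂ = rd g * (1 + rd h * C * rd b' * Cᴴ * rd h) * rd g := by
    rw [show rd g * (1 + rd h * C * rd b' * Cᴴ * rd h) * rd g
        = rd g * rd g + (rd g * rd h) * C * rd b' * Cᴴ * (rd h * rd g) from by noncomm_ring,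
      hgg, hgh, hhg, hH₂]
  have hdetH₂ : H₂.det = ((∏ i, (1 + β * a i) : ℝ) : ℂ)
      * (1 + rd (fun i => a i / (1 + β * a i)) * C * rd b' * Cᴴ).det := by
    rw [hfact, Matrix.det_mul, Matrix.det_mul]
    rw [show (rd g).det * (1 + rd h * C * rd b' * Cᴴ * rd h).det * (rd g).det
        = ((rd g).det * (rd g).det) * (1 + rd h * C * rd b' * Cᴴ * rd h).det from by ring,
      ← Matrix.det_mul, hgg]
    congr 1
    · rw [show (1 : Matrix (Fin n) (Fin n) ℂ) + rd (fun i => β * a i)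
          = rd (fun i => 1 + β * a i) from (one_add_rd _).symm, det_rd]
    · rw [show rd h * C * rd b' * Cᴴ * rd h = (rd h * C * rd b' * Cᴴ) * rd h from by
        noncomm_ring, Matrix.det_one_add_mul_comm,
        show rd h * (rd h * C * rd b' * Cᴴ) = (rd h * rd h) * C * rd b' * Cᴴ from by
        noncomm_ring, hhh]
  rw [hherm, ← hdetH₂]
  exact hle


/-! ### main inequality -/

lemma key : ∀ (n : ℕ) (a b : Fin n → ℝ), (∀ i, 0 ≤ a i) → (∀ i, 0 ≤ b i) →
    Antitone a → Antitone b →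
    ∀ C : Matrix (Fin n) (Fin n) ℂ,
      ((1 : Matrix (Fin n) (Fin n) ℂ) - Cᴴ * C).PosSemidef →
      ((1 : Matrix (Fin n) (Fin n) ℂ) - C * Cᴴ).PosSemidef →
      (1 + rd a * C * rd b * Cᴴ).det ≤ ((∏ i, (1 + a i * b i) : ℝ) : ℂ) := by
  intro n
  induction n with
  | zero =>
      intro a b _ _ _ _ C _ _
      simp [Matrix.det_fin_zero]
  | succ m IH =>
      intro a b ha0 hb0 haA hbA C hC1 hC2
      set β := b (Fin.last m) with hβdef
      have hβ0 : 0 ≤ β := hb0 _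
      set b' : Fin (m+1) → ℝ := fun i => b i - β with hb'def
      have hb'0 : ∀ i, 0 ≤ b' i := fun i => sub_nonneg.mpr (hbA (Fin.le_last i))
      have hsplitb : ∀ i, b i = β + b' i := fun i => by simp [hb'def]
      set a' : Fin (m+1) → ℝ := fun i => a i / (1 + β * a i) with ha'def
      have hdena : ∀ i, 0 < 1 + β * a i := fun i => by nlinarith [ha0 i, mul_nonneg hβ0 (ha0 i)]
      have ha'0 : ∀ i, 0 ≤ a' i := fun i => div_nonneg (ha0 i) (le_of_lt (hdena i))
      have ha'A : Antitone a' := by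
        intro i j hij
        have hji : a j ≤ a i := haA hij
        simp only [ha'def]
        rw [div_le_div_iff₀ (hdena j) (hdena i)]
        nlinarith
      set α := a' (Fin.last m) with hαdef
      have hα0 : 0 ≤ α := ha'0 _
      set a'' : Fin (m+1) → ℝ := fun i => a' i - α with ha''def
      have ha''0 : ∀ i, 0 ≤ a'' i := fun i => sub_nonneg.mpr (ha'A (Fin.le_last i))
      have hsplita : ∀ i, a' i = α + a'' i := fun i => by simp [ha''def]
      set b'' : Fin (m+1) → ℝ := fun i => b' i / (1 + α * b' i) with hb''def
      have hdenb : ∀ i, 0 < 1 + α * b' i := fun i => by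
        nlinarith [hb'0 i, mul_nonneg hα0 (hb'0 i)]
      have hb''0 : ∀ i, 0 ≤ b'' i := fun i => div_nonneg (hb'0 i) (le_of_lt (hdenb i))
      have ha''A : Antitone a'' := fun i j hij => by
        simp only [ha''def]; exact sub_le_sub_right (ha'A hij) α
      have hb'A : Antitone b' := fun i j hij => by
        simp only [hb'def]; exact sub_le_sub_right (hbA hij) β
      have hb''A : Antitone b'' := by
        intro i j hij
        have hji : b' j ≤ b' i := hb'A hij
        simp only [hb''def]
        rw [div_le_div_iff₀ (hdenb j) (hdenb i)]
        nlinarith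
      have ha''last : a'' (Fin.last m) = 0 := by simp [ha''def, hαdef]
      have hb'last : b' (Fin.last m) = 0 := by simp [hb'def, hβdef]
      have hb''last : b'' (Fin.last m) = 0 := by simp [hb''def, hb'last]
      -- step 1
      have step1 := step hβ0 ha0 hb'0 hsplitb C hC2
      rw [show (fun i => a i / (1 + β * a i)) = a' from rfl] at step1
      -- swap 1
      have swap1 : (1 + rd a' * C * rd b' * Cᴴ).det = (1 + rd b' * Cᴴ * (rd a' * C)).det := by
        rw [show (1 : Matrix (Fin (m+1)) (Fin (m+1)) ℂ) + rd a' * C * rd b' * Cᴴ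
            = 1 + (rd a' * C) * (rd b' * Cᴴ) from by noncomm_ring,
          Matrix.det_one_add_mul_comm]
      -- step 2 with Cᴴ
      have hCc : ((1 : Matrix (Fin (m+1)) (Fin (m+1)) ℂ) - Cᴴ * (Cᴴ)ᴴ).PosSemidef := by
        rwa [conjTranspose_conjTranspose]
      have step2 := step hα0 hb'0 ha''0 hsplita Cᴴ hCc
      rw [show (fun i => b' i / (1 + α * b' i)) = b'' from rfl,
        conjTranspose_conjTranspose] at step2
      -- swap 2
      have swap2 : (1 + rd b'' * Cᴴ * rd a'' * C).det = (1 + rd a'' * C * (rd b'' * Cᴴ)).det := by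
        rw [show (1 : Matrix (Fin (m+1)) (Fin (m+1)) ℂ) + rd b'' * Cᴴ * rd a'' * C
            = 1 + (rd b'' * Cᴴ) * (rd a'' * C) from by noncomm_ring,
          Matrix.det_one_add_mul_comm]
      -- reduce dimension
      have hred := reduce ha''last hb''last C
      set C₀ := C.submatrix Fin.castSucc Fin.castSucc with hC₀def
      -- contraction conditions for C₀
      have hC1₀ : ((1 : Matrix (Fin m) (Fin m) ℂ) - C₀ᴴ * C₀).PosSemidef :=
        contraction_sub C hC1
      have hC2₀ : ((1 : Matrix (Fin m) (Fin m) ℂ) - C₀ * C₀ᴴ).PosSemidef := by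
        have h := contraction_sub Cᴴ (by rwa [conjTranspose_conjTranspose])
        rwa [← Matrix.conjTranspose_submatrix, conjTranspose_conjTranspose] at h
      -- IH
      have hcsA : ∀ {f : Fin (m+1) → ℝ}, Antitone f → Antitone (f ∘ Fin.castSucc) :=
        fun hf i j hij => hf (Fin.castSucc_le_castSucc_iff.mpr hij)
      have hIH := IH (a'' ∘ Fin.castSucc) (b'' ∘ Fin.castSucc)
        (fun i => ha''0 _) (fun i => hb''0 _) (hcsA ha''A) (hcsA hb''A) C₀ hC1₀ hC2₀
      -- assemble
      set P1 : ℝ := ∏ i, (1 + β * a i) with hP1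
      set P2 : ℝ := ∏ i, (1 + α * b' i) with hP2
      set Q : ℝ := ∏ j : Fin m, (1 + (a'' ∘ Fin.castSucc) j * (b'' ∘ Fin.castSucc) j) with hQ
      have hP1nn : 0 ≤ P1 := Finset.prod_nonneg fun i _ => by nlinarith [hdena i]
      have hP2nn : 0 ≤ P2 := Finset.prod_nonneg fun i _ => by nlinarith [hdenb i]
      have chain : (1 + rd a * C * rd b * Cᴴ).det ≤ (P1 : ℂ) * ((P2 : ℂ) * (Q : ℂ)) := by
        calc (1 + rd a * C * rd b * Cᴴ).det
            ≤ (P1 : ℂ) * (1 + rd a' * C * rd b' * Cᴴ).det := step1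
          _ = (P1 : ℂ) * (1 + rd b' * Cᴴ * (rd a' * C)).det := by rw [swap1]
          _ = (P1 : ℂ) * (1 + rd b' * Cᴴ * rd a' * C).det := by
              congr 2; noncomm_ring
          _ ≤ (P1 : ℂ) * ((P2 : ℂ) * (1 + rd b'' * Cᴴ * rd a'' * C).det) := by
              apply mul_le_mul_of_nonneg_left step2 (Complex.zero_le_real.mpr hP1nn)
          _ = (P1 : ℂ) * ((P2 : ℂ) * (1 + rd a'' * C * rd b'' * Cᴴ).det) := by
              rw [swap2]
              congr 3
              noncomm_ring
          _ = (P1 : ℂ) * ((P2 : ℂ)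
                * (1 + rd (a'' ∘ Fin.castSucc) * C₀ * rd (b'' ∘ Fin.castSucc) * C₀ᴴ).det) := by
              rw [hred]
          _ ≤ (P1 : ℂ) * ((P2 : ℂ) * (Q : ℂ)) := by
              apply mul_le_mul_of_nonneg_left _ (Complex.zero_le_real.mpr hP1nn)
              apply mul_le_mul_of_nonneg_left hIH (Complex.zero_le_real.mpr hP2nn)
      have hfinal : P1 * (P2 * Q) = ∏ i, (1 + a i * b i) := by
        have h3 : Q = ∏ i : Fin (m+1), (1 + a'' i * b'' i) := by
          rw [Fin.prod_univ_castSucc, ha''last]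
          simp [hQ, Function.comp]
        rw [h3, hP1, hP2, ← Finset.prod_mul_distrib, ← Finset.prod_mul_distrib]
        apply Finset.prod_congr rfl
        intro i _
        have d1 : (1 + β * a i) ≠ 0 := ne_of_gt (hdena i)
        have d2 : (1 + α * b' i) ≠ 0 := ne_of_gt (hdenb i)
        simp only [ha''def, hb''def, ha'def, hb'def]
        have d2' : 1 + α * (b i - β) ≠ 0 := d2
        field_simp
        ring
      calc (1 + rd a * C * rd b * Cᴴ).det ≤ (P1 : ℂ) * ((P2 : ℂ) * (Q : ℂ)) := chain
        _ = ((∏ i, (1 + a i * b i) : ℝ) : ℂ) := by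
            rw [← hfinal]; push_cast; ring

end LogDetAux

open LogDetAux in
/-- Upper bound on Eve's rate: for invertible `G` with singular values
`σ₁ ≥ ... ≥ σₙ` (given by an SVD `G = W · diag σ · Vᴴ`) and positive
semidefinite `Qs` with eigenvalues `p₁ ≥ ... ≥ pₙ` (given by a spectral
decomposition `Qs = T · diag p · Tᴴ`),
`log det (I + G Qs Gᴴ) ≤ ∑ i, log (1 + σᵢ² pᵢ)`. -/
theorem logdet_signal_upper_bound
    (n : ℕ) (G Qs : Matrix (Fin n) (Fin n) ℂ)
    (hG : IsUnit G.det)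
    (W V T : Matrix (Fin n) (Fin n) ℂ)
    (hW : W ∈ Matrix.unitaryGroup (Fin n) ℂ)
    (hV : V ∈ Matrix.unitaryGroup (Fin n) ℂ)
    (hT : T ∈ Matrix.unitaryGroup (Fin n) ℂ)
    (σ p : Fin n → ℝ)
    (hσpos : ∀ i, 0 ≤ σ i) (hσord : Antitone σ)
    (hppos : ∀ i, 0 ≤ p i) (hpord : Antitone p)
    (hsvd : G = W * Matrix.diagonal (fun i => (σ i : ℂ)) * Vᴴ)
    (hspec : Qs = T * Matrix.diagonal (fun i => (p i : ℂ)) * Tᴴ) :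
    Real.log ((1 + G * Qs * Gᴴ).det.re) ≤
      ∑ i, Real.log (1 + σ i ^ 2 * p i) := by
  have hWu : Wᴴ * W = 1 := by
    have := Matrix.mem_unitaryGroup_iff'.mp hW
    rwa [Matrix.star_eq_conjTranspose] at this
  have hVu : V * Vᴴ = 1 := by
    have := Matrix.mem_unitaryGroup_iff.mp hV
    rwa [Matrix.star_eq_conjTranspose] at this
  have hVu' : Vᴴ * V = 1 := by
    have := Matrix.mem_unitaryGroup_iff'.mp hV
    rwa [Matrix.star_eq_conjTranspose] at this
  have hTu : T * Tᴴ = 1 := by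
    have := Matrix.mem_unitaryGroup_iff.mp hT
    rwa [Matrix.star_eq_conjTranspose] at this
  have hTu' : Tᴴ * T = 1 := by
    have := Matrix.mem_unitaryGroup_iff'.mp hT
    rwa [Matrix.star_eq_conjTranspose] at this
  set U : Matrix (Fin n) (Fin n) ℂ := Vᴴ * T with hUdef
  have hUH : Uᴴ = Tᴴ * V := by
    rw [hUdef, Matrix.conjTranspose_mul, Matrix.conjTranspose_conjTranspose]
  have hU1 : Uᴴ * U = 1 := by
    rw [hUH, hUdef, show Tᴴ * V * (Vᴴ * T) = Tᴴ * (V * Vᴴ) * T from by noncomm_ring,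
      hVu, Matrix.mul_one, hTu']
  have hU2 : U * Uᴴ = 1 := by
    rw [hUH, hUdef, show Vᴴ * T * (Tᴴ * V) = Vᴴ * (T * Tᴴ) * V from by noncomm_ring,
      hTu, Matrix.mul_one, hVu']
  -- identify rd with diagonal
  have hrdσ : rd σ = Matrix.diagonal (fun i => (σ i : ℂ)) := rfl
  have hrdp : rd p = Matrix.diagonal (fun i => (p i : ℂ)) := rfl
  -- rewrite G Qs Gᴴ
  have hGQ : G * Qs * Gᴴ = W * (rd σ * U * rd p * Uᴴ * rd σ) * Wᴴ := by
    rw [hsvd, hspec, ← hrdσ, ← hrdp, hUH, hUdef]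
    rw [show (W * rd σ * Vᴴ)ᴴ = V * rd σ * Wᴴ from by
      rw [Matrix.conjTranspose_mul, Matrix.conjTranspose_mul, rd_conjTranspose,
        Matrix.conjTranspose_conjTranspose]
      noncomm_ring]
    noncomm_ring
  -- determinant reduction to the key form
  set M : Matrix (Fin n) (Fin n) ℂ := rd σ * U * rd p * Uᴴ * rd σ with hMdef
  have hdet1 : (1 + G * Qs * Gᴴ).det = (1 + M).det := by
    rw [hGQ, show (1 : Matrix (Fin n) (Fin n) ℂ) + W * M * Wᴴ = 1 + W * (M * Wᴴ) from by
      noncomm_ring, Matrix.det_one_add_mul_comm,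
      show (1 : Matrix (Fin n) (Fin n) ℂ) + M * Wᴴ * W = 1 + M * (Wᴴ * W) from by
      noncomm_ring, hWu, Matrix.mul_one]
  set σ2 : Fin n → ℝ := fun i => σ i ^ 2 with hσ2
  have hσσ : rd σ * rd σ = rd σ2 := by
    rw [rd_mul_rd]; exact rd_congr fun i => (sq (σ i)).symm
  have hdet2 : (1 + M).det = (1 + rd σ2 * U * rd p * Uᴴ).det := by
    rw [hMdef, show (1 : Matrix (Fin n) (Fin n) ℂ) + rd σ * U * rd p * Uᴴ * rd σ
        = 1 + (rd σ * U * rd p * Uᴴ) * rd σ from by noncomm_ring,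
      Matrix.det_one_add_mul_comm,
      show (1 : Matrix (Fin n) (Fin n) ℂ) + rd σ * (rd σ * U * rd p * Uᴴ)
        = 1 + (rd σ * rd σ) * U * rd p * Uᴴ from by noncomm_ring, hσσ]
  -- apply the key inequality
  have hσ2pos : ∀ i, 0 ≤ σ2 i := fun i => sq_nonneg _
  have hσ2A : Antitone σ2 := by
    intro i j hij
    have h1 := hσord hij
    have h2 := hσpos j
    simp only [hσ2]
    nlinarith
  have hkey := key n σ2 p hσ2pos hppos hσ2A hpord U
    (by rw [hU1, sub_self]; exact Matrix.PosSemidef.zero)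
    (by rw [hU2, sub_self]; exact Matrix.PosSemidef.zero)
  -- positivity of the determinant
  have hQpsd : Qs.PosSemidef := by
    rw [hspec, ← hrdp]
    exact (rd_psd hppos).mul_mul_conjTranspose_same T
  have hpd : (1 + G * Qs * Gᴴ).PosDef :=
    Matrix.PosDef.one.add_posSemidef (hQpsd.mul_mul_conjTranspose_same G)
  have hdetpos : 0 < (1 + G * Qs * Gᴴ).det.re := by
    have := hpd.det_pos
    rw [Complex.lt_def] at this
    simpa using this.1
  -- put everything together
  have hre : (1 + G * Qs * Gᴴ).det.re ≤ ∏ i, (1 + σ2 i * p i) := by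
    have h := hkey
    rw [← hdet2, ← hdet1] at h
    rw [Complex.le_def] at h
    have h1 := h.1
    rwa [Complex.ofReal_re] at h1
  have hprodpos : 0 < ∏ i, (1 + σ2 i * p i) := by
    apply Finset.prod_pos
    intro i _
    nlinarith [mul_nonneg (hσ2pos i) (hppos i)]
  calc Real.log ((1 + G * Qs * Gᴴ).det.re)
      ≤ Real.log (∏ i, (1 + σ2 i * p i)) :=
        (Real.log_le_log_iff hdetpos hprodpos).mpr hre
    _ = ∑ i, Real.log (1 + σ i ^ 2 * p i) := by
        rw [Real.log_prod (fun i _ => by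
          nlinarith [mul_nonneg (hσ2pos i) (hppos i)] : ∀ i ∈ Finset.univ, (1 + σ2 i * p i) ≠ 0)]
end

section
/- Let H be an n×n complex matrix with SVD H = W D T†, D = diag(d_1,...,d_n). Let Q_s = T diag(p_1,...,p_n) T† and Q_a = T diag(β_1,...,β_n) T† with p_i, β_i ≥ 0 and p_i β_i = 0 for all i. Then log det(I + (σ²I + H Q_a H†)^{-1} H Q_s H†) = Σ_{i: p_i > 0} log(1 + d_i² p_i / σ²). -/
open Matrix ComplexOrder

/-- SVD precoding with artificial noise on the complementary modes does not
degrade Bob's rate: with `H = W · diag d · Tᴴ`, `Qs = T · diag p · Tᴴ`,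
`Qa = T · diag β · Tᴴ`, `pᵢ, βᵢ ≥ 0`, `pᵢ βᵢ = 0`, and noise variance `s > 0`,
`log det (I + (s I + H Qa Hᴴ)⁻¹ H Qs Hᴴ) = ∑_{i : pᵢ > 0} log (1 + dᵢ² pᵢ / s)`. -/
theorem bob_rate_decouples_with_an
    (n : ℕ) (H W T Qs Qa : Matrix (Fin n) (Fin n) ℂ)
    (hW : W ∈ Matrix.unitaryGroup (Fin n) ℂ)
    (hT : T ∈ Matrix.unitaryGroup (Fin n) ℂ)
    (d p β : Fin n → ℝ) (s : ℝ) (hs : 0 < s)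
    (hd : ∀ i, 0 ≤ d i)
    (hp : ∀ i, 0 ≤ p i) (hβ : ∀ i, 0 ≤ β i)
    (hdisj : ∀ i, p i * β i = 0)
    (hH : H = W * Matrix.diagonal (fun i => (d i : ℂ)) * Tᴴ)
    (hQs : Qs = T * Matrix.diagonal (fun i => (p i : ℂ)) * Tᴴ)
    (hQa : Qa = T * Matrix.diagonal (fun i => (β i : ℂ)) * Tᴴ) :
    Real.log ((1 + ((s : ℂ) • 1 + H * Qa * Hᴴ)⁻¹ * (H * Qs * Hᴴ)).det.re) =
      ∑ i ∈ Finset.univ.filter (fun i => 0 < p i),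
        Real.log (1 + d i ^ 2 * p i / s) := by
  have hTT : Tᴴ * T = 1 := hT.1
  have hWW : Wᴴ * W = 1 := hW.1
  have hWW' : W * Wᴴ = 1 := hW.2
  set f : (Fin n → ℂ) → Matrix (Fin n) (Fin n) ℂ :=
    fun v => W * Matrix.diagonal v * Wᴴ with hf
  have hmul : ∀ v w, f v * f w = f (v * w) := by
    intro v w
    simp only [hf]
    rw [show W * Matrix.diagonal v * Wᴴ * (W * Matrix.diagonal w * Wᴴ)
        = W * Matrix.diagonal v * (Wᴴ * W) * Matrix.diagonal w * Wᴴ by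
      simp [Matrix.mul_assoc], hWW]
    simp only [Matrix.mul_one, Matrix.mul_assoc, Matrix.diagonal_mul_diagonal]
    rfl
  have hadd : ∀ v w, f v + f w = f (v + w) := by
    intro v w
    simp only [hf]
    rw [← Matrix.add_mul, ← Matrix.mul_add, Matrix.diagonal_add]
    rfl
  have hone : f 1 = 1 := by
    simp only [hf, show (1 : Fin n → ℂ) = fun _ => (1 : ℂ) from rfl,
      Matrix.diagonal_one, Matrix.mul_one, hWW']
  have hdetf : ∀ v, (f v).det = ∏ i, v i := by
    intro v
    simp only [hf, Matrix.det_mul, Matrix.det_diagonal]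
    rw [mul_right_comm, ← Matrix.det_mul, hWW', Matrix.det_one, one_mul]
  -- compute H Qa Hᴴ and H Qs Hᴴ
  have hstar : (star fun i => (d i : ℂ)) = fun i => (d i : ℂ) := by
    funext i; simp
  have hHconj : Hᴴ = T * Matrix.diagonal (fun i => (d i : ℂ)) * Wᴴ := by
    rw [hH]
    simp only [Matrix.conjTranspose_mul, Matrix.diagonal_conjTranspose,
      Matrix.conjTranspose_conjTranspose, hstar, Matrix.mul_assoc]
  have hTcancel : ∀ X : Matrix (Fin n) (Fin n) ℂ, Tᴴ * (T * X) = X := by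
    intro X; rw [← Matrix.mul_assoc, hTT, Matrix.one_mul]
  have key : ∀ (q : Fin n → ℝ),
      H * (T * Matrix.diagonal (fun i => (q i : ℂ)) * Tᴴ) * Hᴴ
        = f (fun i => (d i : ℂ)^2 * q i) := by
    intro q
    rw [hHconj, hH, hf]
    simp only [Matrix.mul_assoc]
    rw [hTcancel, hTcancel]
    have hdiag : Matrix.diagonal (fun i => (d i : ℂ)) *
        (Matrix.diagonal (fun i => (q i : ℂ)) *
          (Matrix.diagonal (fun i => (d i : ℂ)) * Wᴴ))
        = Matrix.diagonal (fun i => (d i : ℂ)^2 * q i) * Wᴴ := by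
      rw [← Matrix.mul_assoc, ← Matrix.mul_assoc, Matrix.diagonal_mul_diagonal,
        Matrix.diagonal_mul_diagonal]
      congr 1
      funext i
      ring
    rw [hdiag]
  have hQaH : H * Qa * Hᴴ = f (fun i => (d i : ℂ)^2 * β i) := by
    rw [hQa]; exact key β
  have hQsH : H * Qs * Hᴴ = f (fun i => (d i : ℂ)^2 * p i) := by
    rw [hQs]; exact key p
  set a : Fin n → ℂ := fun i => (s : ℂ) + (d i : ℂ)^2 * β i with ha
  have haR : ∀ i, a i = ((s + d i ^ 2 * β i : ℝ) : ℂ) := by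
    intro i; push_cast [ha]; ring
  have haRpos : ∀ i, 0 < s + d i ^ 2 * β i := by
    intro i
    have : 0 ≤ d i ^ 2 * β i := mul_nonneg (sq_nonneg _) (hβ i)
    linarith
  have hane : ∀ i, a i ≠ 0 := by
    intro i
    rw [haR i]
    exact_mod_cast (haRpos i).ne'
  have hsmul : (s : ℂ) • (1 : Matrix (Fin n) (Fin n) ℂ) + H * Qa * Hᴴ = f a := by
    rw [hQaH]
    have h1 : (s : ℂ) • (1 : Matrix (Fin n) (Fin n) ℂ) = f (fun _ => (s : ℂ)) := by
      simp only [hf]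
      rw [← Matrix.smul_one_eq_diagonal]
      rw [Matrix.mul_smul, Matrix.mul_one, Matrix.smul_mul, hWW']
    rw [h1, hadd]
    rfl
  have hinv : (f a)⁻¹ = f (fun i => (a i)⁻¹) := by
    refine Matrix.inv_eq_right_inv ?_
    rw [hmul]
    have : a * (fun i => (a i)⁻¹) = 1 := by
      funext i
      simp [mul_inv_cancel₀ (hane i)]
    rw [this, hone]
  have hdet : (1 + ((s : ℂ) • 1 + H * Qa * Hᴴ)⁻¹ * (H * Qs * Hᴴ)).det
      = ∏ i, (1 + (a i)⁻¹ * ((d i : ℂ)^2 * p i)) := by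
    rw [hsmul, hQsH, hinv, hmul, ← hone, hadd, hdetf]
    exact Finset.prod_congr rfl fun i _ => rfl
  set c : Fin n → ℝ := fun i => if 0 < p i then 1 + d i ^ 2 * p i / s else 1 with hc
  have hterm : ∀ i, (1 + (a i)⁻¹ * ((d i : ℂ)^2 * p i)) = ((c i : ℝ) : ℂ) := by
    intro i
    by_cases hpi : 0 < p i
    · have hβi : β i = 0 := by
        rcases mul_eq_zero.1 (hdisj i) with h | h
        · exact absurd h hpi.ne'
        · exact h
      simp only [hc, if_pos hpi, ha]
      push_cast [hβi]
      have hs' : (s : ℂ) ≠ 0 := by exact_mod_cast hs.ne'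
      simp only [mul_zero, add_zero]
      field_simp
    · have hpi0 : p i = 0 := le_antisymm (not_lt.1 hpi) (hp i)
      simp [hc, if_neg hpi, hpi0]
  have hcpos : ∀ i, 0 < c i := by
    intro i
    by_cases hpi : 0 < p i
    · simp only [hc, if_pos hpi]
      have : 0 ≤ d i ^ 2 * p i / s := by positivity
      linarith
    · simp [hc, if_neg hpi]
  have hdet2 : (1 + ((s : ℂ) • 1 + H * Qa * Hᴴ)⁻¹ * (H * Qs * Hᴴ)).det.re = ∏ i, c i := by
    rw [hdet]
    have : ∏ i, (1 + (a i)⁻¹ * ((d i : ℂ)^2 * p i)) = ((∏ i, c i : ℝ) : ℂ) := by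
      push_cast
      exact Finset.prod_congr rfl fun i _ => hterm i
    rw [this, Complex.ofReal_re]
  rw [hdet2, Real.log_prod (fun i _ => (hcpos i).ne')]
  rw [← Finset.sum_filter_add_sum_filter_not Finset.univ (fun i => 0 < p i)
    (fun i => Real.log (c i))]
  have h2 : ∑ i ∈ Finset.univ.filter (fun i => ¬ 0 < p i), Real.log (c i) = 0 := by
    apply Finset.sum_eq_zero
    intro i hi
    simp only [Finset.mem_filter] at hi
    simp [hc, if_neg hi.2]
  rw [h2, add_zero]
  apply Finset.sum_congr rfl
  intro i hi
  simp only [Finset.mem_filter] at hi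
  simp [hc, if_pos hi.2]
end
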